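/- arXiv:2202.04721 — 7 statements merged into one kernel-verified Lean document; each statement's English description precedes it below -/
import Mathlib

section
/- Let K ⊂ R^n be convex and compact with 0 ∈ K and rB ⊆ K for some r > 0, where B is the closed Euclidean unit ball. Fix δ ∈ (0,1) and δ' ∈ [0, r). Let y ∈ R^n with y/(1 - δ'/r) ∉ K, and let g ∈ R^n be a separating hyperplane, i.e., (y/(1-δ'/r) - x)ᵀ g > 0 for all x ∈ K. Then for every z ∈ (1-δ)(1-δ'/r)K, it holds that (y - z)ᵀ g > δ(r - δ')‖g‖. -/
open Metric Set
open scoped Pointwise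
open scoped RealInnerProductSpace

theorem stmt1 {n : ℕ} (K : Set (EuclideanSpace ℝ (Fin n))) (hK : Convex ℝ K)
    (hKc : IsCompact K) (h0 : (0 : EuclideanSpace ℝ (Fin n)) ∈ K)
    (r : ℝ) (hr : 0 < r)
    (hball : closedBall (0 : EuclideanSpace ℝ (Fin n)) r ⊆ K)
    (δ δ' : ℝ) (hδ : δ ∈ Set.Ioo (0 : ℝ) 1) (hδ' : δ' ∈ Set.Ico (0 : ℝ) r)
    (y g : EuclideanSpace ℝ (Fin n))
    (hy : (1 - δ' / r)⁻¹ • y ∉ K)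
    (hsep : ∀ x ∈ K, 0 < ⟪(1 - δ' / r)⁻¹ • y - x, g⟫) :
    ∀ z ∈ ((1 - δ) * (1 - δ' / r)) • K, δ * (r - δ') * ‖g‖ < ⟪y - z, g⟫ := by
  have hc : 0 < 1 - δ' / r := by
    rw [sub_pos]
    exact (div_lt_one hr).mpr hδ'.2
  have hg : g ≠ 0 := by
    intro h
    have := hsep 0 h0
    simp [h] at this
  have hgn : 0 < ‖g‖ := norm_pos_iff.mpr hg
  rintro z ⟨x, hx, rfl⟩
  set u : EuclideanSpace ℝ (Fin n) := ‖g‖⁻¹ • g with hu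
  have hru : r • u ∈ K := by
    apply hball
    have : ‖r • u‖ = r := by
      rw [hu, norm_smul, norm_smul, Real.norm_eq_abs, Real.norm_eq_abs,
        abs_of_pos hr, abs_of_pos (inv_pos.mpr hgn), inv_mul_cancel₀ (ne_of_gt hgn), mul_one]
    simp [this]
  have hx' : (1 - δ) • x + δ • (r • u) ∈ K :=
    hK hx hru (by linarith [hδ.2]) (le_of_lt hδ.1) (by ring)
  have hs := hsep _ hx'
  simp only [inner_sub_left, inner_add_left, real_inner_smul_left, hu,
    real_inner_self_eq_norm_sq] at hs ⊢
  have hrc : r - δ' = r * (1 - δ' / r) := by field_simp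
  have hinv : (1 - δ' / r)⁻¹ * (1 - δ' / r) = 1 := inv_mul_cancel₀ (ne_of_gt hc)
  have hginv : ‖g‖⁻¹ * ‖g‖ ^ 2 = ‖g‖ := by field_simp
  rw [hginv] at hs
  have h2 := mul_pos hc hs
  have h3 : (1 - δ' / r) * ((1 - δ' / r)⁻¹ * ⟪y, g⟫) = ⟪y, g⟫ := by
    rw [← mul_assoc, mul_inv_cancel₀ (ne_of_gt hc), one_mul]
  have key : 0 < ⟪y, g⟫ - (1 - δ) * (1 - δ' / r) * ⟪x, g⟫ - δ * (r * (1 - δ' / r) * ‖g‖) := by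
    nlinarith [h2, h3]
  have hrc2 : δ * (r - δ') * ‖g‖ = δ * (r * (1 - δ' / r) * ‖g‖) := by rw [hrc]; ring
  linarith [key, hrc2]
end

section
/- Let K ⊂ R^n be convex and compact, y ∈ R^n, and x_i ∈ K. Let v_i ∈ argmin_{x ∈ K} (x_i - y)ᵀ x. Suppose (x_i - y)ᵀ(x_i - v_i) ≤ ε and ‖x_i - y‖² > 3ε for some ε > 0. Then for all z ∈ K it holds that (y - z)ᵀ(y - x_i) > 2ε. -/
open Metric Set
open scoped RealInnerProductSpace

theorem stmt7 {n : ℕ} (K : Set (EuclideanSpace ℝ (Fin n))) (hK : Convex ℝ K)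
    (hKc : IsCompact K) (y xi vi : EuclideanSpace ℝ (Fin n))
    (hxi : xi ∈ K) (hvi : vi ∈ K)
    (hargmin : ∀ x ∈ K, ⟪xi - y, vi⟫ ≤ ⟪xi - y, x⟫)
    (ε : ℝ) (hε : 0 < ε)
    (hgap : ⟪xi - y, xi - vi⟫ ≤ ε)
    (hfar : 3 * ε < ‖xi - y‖ ^ 2) :
    ∀ z ∈ K, 2 * ε < ⟪y - z, y - xi⟫ := by
  intro z hz
  have h1 := hargmin z hz
  have hnorm : ⟪xi - y, xi - y⟫ = ‖xi - y‖ ^ 2 := real_inner_self_eq_norm_sq _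
  have e1 : ⟪y - z, y - xi⟫ = ⟪xi - y, z⟫ - ⟪xi - y, y⟫ := by
    rw [(neg_sub z y).symm, (neg_sub xi y).symm,
      inner_neg_neg, real_inner_comm]
    simp [inner_sub_left, inner_sub_right]
  have e2 : ⟪xi - y, xi - vi⟫ = ⟪xi - y, xi⟫ - ⟪xi - y, vi⟫ := inner_sub_right _ _ _
  have e3 : ⟪xi - y, xi - y⟫ = ⟪xi - y, xi⟫ - ⟪xi - y, y⟫ := inner_sub_right _ _ _
  linarith
end

section
/- Consider online gradient descent without feasibility: points ỹ_1, ..., ỹ_T with updates y_{t+1} = ỹ_t - η ∇_t where ∇_t ∈ ∂f_t(ỹ_t), and ỹ_{t+1} is any point satisfying ‖ỹ_{t+1} - z‖² ≤ ‖y_{t+1} - z‖² for all z ∈ K (an infeasible projection). If all f_t are convex, then for every subinterval [s,e] ⊆ [T] and every x ∈ K: Σ_{t=s}^{e} (f_t(ỹ_t) - f_t(x)) ≤ ‖ỹ_s - x‖²/(2η) + (η/2) Σ_{t=s}^{e} ‖∇_t‖². -/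
open Metric Set Finset
open scoped RealInnerProductSpace BigOperators

theorem stmt11 {n : ℕ} (K : Set (EuclideanSpace ℝ (Fin n))) (hK : Convex ℝ K)
    (hKc : IsCompact K) (T : ℕ) (η : ℝ) (hη : 0 < η)
    (f : ℕ → EuclideanSpace ℝ (Fin n) → ℝ)
    (ytil grad : ℕ → EuclideanSpace ℝ (Fin n))
    (hconv : ∀ t, Convex ℝ (Set.univ : Set (EuclideanSpace ℝ (Fin n))) ∧
      ConvexOn ℝ Set.univ (f t))
    (hsubgrad : ∀ t, ∀ x, f t (ytil t) + ⟪grad t, x - ytil t⟫ ≤ f t x)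
    (hproj : ∀ t, ∀ z ∈ K,
      ‖ytil (t + 1) - z‖ ^ 2 ≤ ‖(ytil t - η • grad t) - z‖ ^ 2) :
    ∀ s e : ℕ, s ≤ e → e ≤ T → ∀ x ∈ K,
      ∑ t ∈ Finset.Icc s e, (f t (ytil t) - f t x) ≤
        ‖ytil s - x‖ ^ 2 / (2 * η) +
          (η / 2) * ∑ t ∈ Finset.Icc s e, ‖grad t‖ ^ 2 := by
  intro s e hse heT x hx
  -- per-step bound
  have step : ∀ t, f t (ytil t) - f t x ≤
      (‖ytil t - x‖ ^ 2 - ‖ytil (t + 1) - x‖ ^ 2) / (2 * η)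
        + (η / 2) * ‖grad t‖ ^ 2 := by
    intro t
    have h1 : f t (ytil t) - f t x ≤ ⟪grad t, ytil t - x⟫ := by
      have := hsubgrad t x
      have hlin : ⟪grad t, x - ytil t⟫ = -⟪grad t, ytil t - x⟫ := by
        rw [← inner_neg_right]; congr 1; abel
      linarith [this, hlin.le, hlin.ge]
    have hexp : ‖(ytil t - η • grad t) - x‖ ^ 2
        = ‖ytil t - x‖ ^ 2 - 2 * η * ⟪grad t, ytil t - x⟫ + η ^ 2 * ‖grad t‖ ^ 2 := by
      have : (ytil t - η • grad t) - x = (ytil t - x) - η • grad t := by abel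
      rw [this, norm_sub_sq_real, inner_smul_right, norm_smul]
      rw [real_inner_comm]
      ring_nf
      rw [Real.norm_eq_abs, sq_abs]
    have h2 := hproj t x hx
    have h3 : ‖ytil (t + 1) - x‖ ^ 2
        ≤ ‖ytil t - x‖ ^ 2 - 2 * η * ⟪grad t, ytil t - x⟫ + η ^ 2 * ‖grad t‖ ^ 2 := by
      rw [← hexp]; exact h2
    have h4 : ⟪grad t, ytil t - x⟫ ≤
        (‖ytil t - x‖ ^ 2 - ‖ytil (t + 1) - x‖ ^ 2) / (2 * η)
          + (η / 2) * ‖grad t‖ ^ 2 := by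
      rw [div_add' _ _ _ (by positivity : (2 * η) ≠ 0)]
      rw [le_div_iff₀ (by positivity : (0:ℝ) < 2 * η)]
      nlinarith
    linarith
  -- telescoping sum, by induction
  have key : ∀ e', s ≤ e' →
      ∑ t ∈ Finset.Icc s e', (f t (ytil t) - f t x) ≤
        (‖ytil s - x‖ ^ 2 - ‖ytil (e' + 1) - x‖ ^ 2) / (2 * η)
          + (η / 2) * ∑ t ∈ Finset.Icc s e', ‖grad t‖ ^ 2 := by
    intro e'
    induction e' with
    | zero =>
      intro hs0
      interval_cases s
      simpa using step 0
    | succ m ih =>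
      intro hsm
      rcases Nat.lt_or_ge s (m + 1) with h | h
      · have hsm' : s ≤ m := Nat.lt_succ_iff.mp h
        rw [Finset.sum_Icc_succ_top (by omega), Finset.sum_Icc_succ_top (by omega)]
        have := ih hsm'
        have hst := step (m + 1)
        have : (‖ytil s - x‖ ^ 2 - ‖ytil (m + 1) - x‖ ^ 2) / (2 * η)
            + (‖ytil (m + 1) - x‖ ^ 2 - ‖ytil (m + 1 + 1) - x‖ ^ 2) / (2 * η)
            = (‖ytil s - x‖ ^ 2 - ‖ytil (m + 1 + 1) - x‖ ^ 2) / (2 * η) := by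
          field_simp
          ring
        nlinarith [ih hsm', step (m + 1)]
      · have hs : s = m + 1 := le_antisymm hsm h
        rw [hs]
        simpa using step (m + 1)
  have h := key e hse
  have hnn : 0 ≤ ‖ytil (e + 1) - x‖ ^ 2 := by positivity
  have hd : (‖ytil s - x‖ ^ 2 - ‖ytil (e + 1) - x‖ ^ 2) / (2 * η)
      ≤ ‖ytil s - x‖ ^ 2 / (2 * η) := by
    apply div_le_div_of_nonneg_right ?_ (by positivity)
    linarith
  linarith
end

section
/- Consider online gradient descent without feasibility with α-strongly convex losses f_t and step sizes η_t = 1/(αt): updates y_{t+1} = ỹ_t - η_t ∇_t with ∇_t ∈ ∂f_t(ỹ_t) and ỹ_{t+1} an infeasible projection of y_{t+1} onto K. Then for every x ∈ K: Σ_{t=1}^{T} (f_t(ỹ_t) - f_t(x)) ≤ Σ_{t=1}^{T} ‖∇_t‖²/(2αt). -/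
open Metric Set Finset
open scoped RealInnerProductSpace BigOperators

theorem stmt12 {n : ℕ} (K : Set (EuclideanSpace ℝ (Fin n))) (hK : Convex ℝ K)
    (hKc : IsCompact K) (T : ℕ) (α : ℝ) (hα : 0 < α)
    (f : ℕ → EuclideanSpace ℝ (Fin n) → ℝ)
    (ytil grad : ℕ → EuclideanSpace ℝ (Fin n))
    (hsc : ∀ t ∈ Finset.Icc 1 T, ∀ x,
      f t (ytil t) - f t x ≤ ⟪grad t, ytil t - x⟫ - (α / 2) * ‖ytil t - x‖ ^ 2)
    (hproj : ∀ t ∈ Finset.Icc 1 T, ∀ z ∈ K,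
      ‖ytil (t + 1) - z‖ ^ 2 ≤ ‖(ytil t - (1 / (α * t)) • grad t) - z‖ ^ 2) :
    ∀ x ∈ K,
      ∑ t ∈ Finset.Icc 1 T, (f t (ytil t) - f t x) ≤
        ∑ t ∈ Finset.Icc 1 T, ‖grad t‖ ^ 2 / (2 * α * t) := by
  intro x hx
  set D : ℕ → ℝ := fun t => ‖ytil t - x‖ ^ 2 with hD
  set g : ℕ → ℝ := fun t => α * ((t : ℝ) - 1) / 2 * D t with hg
  have key : ∀ t ∈ Finset.Icc 1 T,
      f t (ytil t) - f t x ≤ (g t - g (t + 1)) + ‖grad t‖ ^ 2 / (2 * α * t) := by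
    intro t ht
    obtain ⟨ht1, htT⟩ := Finset.mem_Icc.mp ht
    have htpos : (0 : ℝ) < t := by exact_mod_cast ht1
    have hηpos : (0 : ℝ) < α * t := by positivity
    have h1 := hsc t ht x
    have h2 := hproj t ht x hx
    set e : ℝ := 1 / (α * t) with he_def
    have hepos : 0 < e := by positivity
    have hDt : D t = ‖ytil t - x‖ ^ 2 := rfl
    have hDt1 : D (t + 1) = ‖ytil (t + 1) - x‖ ^ 2 := rfl
    have expand : ‖(ytil t - e • grad t) - x‖ ^ 2
        = D t - 2 * e * ⟪grad t, ytil t - x⟫ + e ^ 2 * ‖grad t‖ ^ 2 := by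
      have h4 : (ytil t - e • grad t) - x = (ytil t - x) - e • grad t := by
        abel
      rw [h4, norm_sub_sq_real, real_inner_smul_right, real_inner_comm,
        norm_smul, Real.norm_eq_abs, abs_of_pos hepos, hDt]
      ring
    rw [expand, ← hDt1] at h2
    have hI : ⟪grad t, ytil t - x⟫ ≤ (α * t / 2) * (D t - D (t + 1))
        + ‖grad t‖ ^ 2 / (2 * α * t) := by
      have h5 : 2 * e * ⟪grad t, ytil t - x⟫
          ≤ D t - D (t + 1) + e ^ 2 * ‖grad t‖ ^ 2 := by linarith
      have h6 := mul_le_mul_of_nonneg_left h5 (by positivity : (0 : ℝ) ≤ α * t / 2)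
      have hmulI : α * (t : ℝ) / 2 * (2 * e * ⟪grad t, ytil t - x⟫)
          = ⟪grad t, ytil t - x⟫ := by
        rw [he_def]; field_simp
      have hmulG : α * (t : ℝ) / 2 * (e ^ 2 * ‖grad t‖ ^ 2)
          = ‖grad t‖ ^ 2 / (2 * α * t) := by
        rw [he_def]; field_simp
      nlinarith [h6, hmulI, hmulG]
    have hgoal : g t - g (t + 1) = α * ((t : ℝ) - 1) / 2 * D t - α * t / 2 * D (t + 1) := by
      simp only [hg]
      push_cast
      ring
    rw [hgoal]
    rw [hDt] at hI ⊢
    rw [hDt1] at hI ⊢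
    nlinarith [h1, hI]
  have tele : ∀ N : ℕ, ∑ t ∈ Finset.Icc 1 N, (g t - g (t + 1)) = g 1 - g (N + 1) := by
    intro N
    induction N with
    | zero => simp
    | succ N ih =>
      rw [Finset.sum_Icc_succ_top (by omega : 1 ≤ N + 1), ih]
      ring
  have hg1 : g 1 = 0 := by simp [hg]
  have hgT : 0 ≤ g (T + 1) := by
    simp only [hg, hD]
    have h8 : ((T + 1 : ℕ) : ℝ) - 1 = (T : ℝ) := by push_cast; ring
    rw [h8]
    positivity
  calc ∑ t ∈ Finset.Icc 1 T, (f t (ytil t) - f t x)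
      ≤ ∑ t ∈ Finset.Icc 1 T, ((g t - g (t + 1)) + ‖grad t‖ ^ 2 / (2 * α * t)) :=
        Finset.sum_le_sum key
    _ = (∑ t ∈ Finset.Icc 1 T, (g t - g (t + 1)))
        + ∑ t ∈ Finset.Icc 1 T, ‖grad t‖ ^ 2 / (2 * α * t) := Finset.sum_add_distrib
    _ ≤ ∑ t ∈ Finset.Icc 1 T, ‖grad t‖ ^ 2 / (2 * α * t) := by
        rw [tele T, hg1]
        linarith
end

section
/- Let K ⊂ R^n be convex and compact with 0 ∈ K ⊆ RB and rB ⊆ K for r > 0. Fix δ ∈ (0,1), δ' ∈ [0,r). Consider the iterative procedure: y_1 is the Euclidean projection of y_0 onto RB; at step i, if y_i/(1-δ'/r) ∉ K, take a separating hyperplane g_i (so that (y_i/(1-δ'/r) - x)ᵀ g_i > 0 for all x ∈ K) and set y_{i+1} = y_i - (δ(r-δ')/‖g_i‖) g_i; otherwise stop and output y = y_i. Then the procedure stops after at most (dist²(y_0, K_{δ,δ'/r}) - dist²(y, K_{δ,δ'/r}))/(δ²(r-δ')²) + 1 iterations, the output y lies in (1-δ'/r)K, and for all z ∈ K_{δ,δ'/r}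 = (1-δ)(1-δ'/r)K, ‖y - z‖² ≤ ‖y_0 - z‖². -/
open Metric Set
open scoped Pointwise
open scoped RealInnerProductSpace

lemma proj_contract {E : Type*} [NormedAddCommGroup E] [InnerProductSpace ℝ E]
    (y0 z : E) (R : ℝ) (hz : ‖z‖ ≤ R) :
    ‖(max 1 (‖y0‖ / R))⁻¹ • y0 - z‖ ≤ ‖y0 - z‖ := by
  rcases le_or_gt (‖y0‖ / R) 1 with h | h
  · rw [max_eq_left h, inv_one, one_smul]
  · rw [max_eq_right h.le]
    have hR : 0 < R := by
      by_contra hR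
      push_neg at hR
      have : ‖y0‖ / R ≤ 0 := div_nonpos_iff.mpr (Or.inl ⟨norm_nonneg _, hR⟩)
      linarith
    have hy0R : R < ‖y0‖ := (one_lt_div hR).mp h
    have hy0 : (0:ℝ) < ‖y0‖ := lt_trans hR hy0R
    set t : ℝ := (‖y0‖ / R)⁻¹ with ht
    have ht0 : 0 < t := inv_pos.mpr (lt_trans one_pos h)
    have ht1 : t ≤ 1 := inv_le_one_of_one_le₀ h.le
    have htn : t * ‖y0‖ = R := by
      rw [ht, inv_div, div_mul_cancel₀ _ hy0.ne']
    have hip : ⟪y0, z⟫ ≤ t * ‖y0‖ ^ 2 := by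
      have h1 : ⟪y0, z⟫ ≤ ‖y0‖ * ‖z‖ := real_inner_le_norm y0 z
      have h2 : ‖y0‖ * ‖z‖ ≤ ‖y0‖ * R := by
        exact mul_le_mul_of_nonneg_left hz (norm_nonneg _)
      nlinarith [htn]
    have hsq : ‖t • y0 - z‖ ^ 2 ≤ ‖y0 - z‖ ^ 2 := by
      rw [norm_sub_sq_real, norm_sub_sq_real, norm_smul, real_inner_smul_left,
        Real.norm_eq_abs, abs_of_pos ht0]
      nlinarith [sq_nonneg ((1 - t) * ‖y0‖),
        mul_nonneg (sub_nonneg.mpr ht1) (sub_nonneg.mpr hip)]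
    have h1 := Real.sqrt_le_sqrt hsq
    rwa [Real.sqrt_sq (norm_nonneg _), Real.sqrt_sq (norm_nonneg _)] at h1

theorem stmt13 {n : ℕ} (K : Set (EuclideanSpace ℝ (Fin n))) (hK : Convex ℝ K)
    (hKc : IsCompact K) (h0 : (0 : EuclideanSpace ℝ (Fin n)) ∈ K)
    (r R : ℝ) (hr : 0 < r)
    (hrK : closedBall (0 : EuclideanSpace ℝ (Fin n)) r ⊆ K)
    (hKR : K ⊆ closedBall (0 : EuclideanSpace ℝ (Fin n)) R)
    (δ δ' : ℝ) (hδ : δ ∈ Set.Ioo (0 : ℝ) 1) (hδ' : δ' ∈ Set.Ico (0 : ℝ) r)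
    (y0 : EuclideanSpace ℝ (Fin n))
    (y g : ℕ → EuclideanSpace ℝ (Fin n))
    (hy1 : y 0 = (max 1 (‖y0‖ / R))⁻¹ • y0)
    (k : ℕ)
    (hstep : ∀ i < k, (1 - δ' / r)⁻¹ • y i ∉ K ∧
      (∀ x ∈ K, 0 < ⟪(1 - δ' / r)⁻¹ • y i - x, g i⟫) ∧
      y (i + 1) = y i - (δ * (r - δ') / ‖g i‖) • g i)
    (hstop : (1 - δ' / r)⁻¹ • y k ∈ K) :
    (k : ℝ) ≤
      ((Metric.infDist y0 (((1 - δ) * (1 - δ' / r)) • K)) ^ 2 -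
        (Metric.infDist (y k) (((1 - δ) * (1 - δ' / r)) • K)) ^ 2) /
          (δ ^ 2 * (r - δ') ^ 2) + 1 ∧
    y k ∈ (1 - δ' / r) • K ∧
    ∀ z ∈ ((1 - δ) * (1 - δ' / r)) • K, ‖y k - z‖ ^ 2 ≤ ‖y0 - z‖ ^ 2 := by
  obtain ⟨hδ0, hδ1⟩ := hδ
  obtain ⟨hδ'0, hδ'r⟩ := hδ'
  have hR0 : 0 ≤ R := by
    have := hKR h0
    simpa [mem_closedBall, dist_self] using this
  set ρ : ℝ := 1 - δ' / r with hρdef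
  have hρ0 : 0 < ρ := by
    have : δ' / r < 1 := (div_lt_one hr).mpr hδ'r
    simp only [hρdef]; linarith
  have hρ1 : ρ ≤ 1 := by
    have : 0 ≤ δ' / r := div_nonneg hδ'0 hr.le
    simp only [hρdef]; linarith
  have hρr : ρ * r = r - δ' := by
    rw [hρdef, sub_mul, div_mul_cancel₀ _ hr.ne', one_mul]
  set s : ℝ := (1 - δ) * ρ with hsdef
  have hs0 : 0 < s := mul_pos (by linarith) hρ0
  have hs1 : s ≤ 1 := by nlinarith
  set c : ℝ := δ * (r - δ') with hcdef
  have hc0 : 0 < c := mul_pos hδ0 (by linarith)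
  set K' : Set (EuclideanSpace ℝ (Fin n)) := ((1 - δ) * ρ) • K with hK'def
  have hK'ne : K'.Nonempty := ⟨0, ⟨0, h0, smul_zero _⟩⟩
  have hnormK : ∀ x ∈ K, ‖x‖ ≤ R := fun x hx => by
    have := hKR hx
    simpa [mem_closedBall, dist_zero_right] using this
  have hzR : ∀ z ∈ K', ‖z‖ ≤ R := by
    rintro z ⟨x, hx, rfl⟩
    rw [norm_smul, Real.norm_eq_abs, abs_of_pos hs0]
    calc s * ‖x‖ ≤ 1 * R := mul_le_mul hs1 (hnormK x hx) (norm_nonneg _) one_pos.le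
    _ = R := one_mul R
  -- per-step decrease
  have hstep' : ∀ i < k, ∀ z ∈ K', ‖y (i+1) - z‖^2 ≤ ‖y i - z‖^2 - c^2 := by
    intro i hi z hz
    obtain ⟨hni, hsep, heq⟩ := hstep i hi
    obtain ⟨x, hx, rfl⟩ := hz
    beta_reduce
    have hg0 : g i ≠ 0 := by
      intro h
      have := hsep 0 h0
      rw [h, inner_zero_right] at this
      exact lt_irrefl 0 this
    have hgn : 0 < ‖g i‖ := norm_pos_iff.mpr hg0
    have hball : (r * ‖g i‖⁻¹) • g i ∈ K := by
      apply hrK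
      rw [mem_closedBall, dist_zero_right, norm_smul, Real.norm_eq_abs,
        abs_of_pos (mul_pos hr (inv_pos.mpr hgn)), mul_assoc,
        inv_mul_cancel₀ hgn.ne', mul_one]
    have hA := hsep x hx
    have hB := hsep _ hball
    rw [inner_sub_left, real_inner_smul_left] at hA
    rw [inner_sub_left, real_inner_smul_left, real_inner_smul_left,
      real_inner_self_eq_norm_sq] at hB
    have hB' : r * ‖g i‖ < ρ⁻¹ * ⟪y i, g i⟫ := by
      have hgg : r * ‖g i‖⁻¹ * ‖g i‖^2 = r * ‖g i‖ := by
        field_simp [hgn.ne']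
      linarith
    -- main inner product bound
    have hP : ρ * (ρ⁻¹ * ⟪y i, g i⟫) = ⟪y i, g i⟫ := by
      rw [← mul_assoc, mul_inv_cancel₀ hρ0.ne', one_mul]
    have hcG : c * ‖g i‖ = ρ * (δ * (r * ‖g i‖)) := by
      rw [hcdef, ← hρr]; ring
    have hmain : c * ‖g i‖ ≤ ⟪y i - ((1 - δ) * ρ) • x, g i⟫ := by
      rw [inner_sub_left, real_inner_smul_left, ← hP, hcG]
      nlinarith [mul_pos hρ0 (mul_pos (show (0:ℝ) < 1 - δ by linarith) hA),
        mul_pos hρ0 (mul_pos hδ0 (sub_pos.mpr hB'))]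
    have heq2 : ‖y (i+1) - ((1 - δ) * ρ) • x‖^2
        = ‖y i - ((1 - δ) * ρ) • x‖^2
          - 2 * (c / ‖g i‖) * ⟪y i - ((1 - δ) * ρ) • x, g i⟫ + c^2 := by
      rw [heq]
      have hrw : y i - (δ * (r - δ') / ‖g i‖) • g i - ((1 - δ) * ρ) • x
          = (y i - ((1 - δ) * ρ) • x) - (c / ‖g i‖) • g i := by
        rw [hcdef]; abel
      rw [hrw, norm_sub_sq_real, real_inner_smul_right, norm_smul,
        Real.norm_eq_abs, abs_of_pos (div_pos hc0 hgn), div_mul_cancel₀ _ hgn.ne']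
      ring
    have hkey : (c / ‖g i‖) * (c * ‖g i‖) = c^2 := by
      field_simp
    have h3 := mul_le_mul_of_nonneg_left hmain (div_pos hc0 hgn).le
    rw [hkey] at h3
    linarith [heq2, h3]
  -- accumulated inequality
  have hsum : ∀ i ≤ k, ∀ z ∈ K', ‖y i - z‖^2 + (i:ℝ) * c^2 ≤ ‖y 0 - z‖^2 := by
    intro i
    induction i with
    | zero => intro _ z _; simp
    | succ m ih =>
      intro hm z hz
      have h1 := ih (le_of_lt (Nat.lt_of_succ_le hm)) z hz
      have h2 := hstep' m (Nat.lt_of_succ_le hm) z hz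
      push_cast
      push_cast at h1
      linarith
  have hproj : ∀ z ∈ K', ‖y 0 - z‖ ≤ ‖y0 - z‖ := by
    intro z hz
    rw [hy1]
    exact proj_contract y0 z R (hzR z hz)
  have hcomb : ∀ z ∈ K', ‖y k - z‖^2 + (k:ℝ) * c^2 ≤ ‖y0 - z‖^2 := by
    intro z hz
    have h1 := hsum k le_rfl z hz
    have h2 : ‖y 0 - z‖^2 ≤ ‖y0 - z‖^2 :=
      pow_le_pow_left₀ (norm_nonneg _) (hproj z hz) 2
    linarith
  have hkc : (0:ℝ) ≤ (k:ℝ) * c^2 := by positivity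
  refine ⟨?_, ?_, ?_⟩
  · -- iteration bound
    set dk : ℝ := Metric.infDist (y k) K' with hdk
    have hdk0 : 0 ≤ dk := Metric.infDist_nonneg
    have h1 : ∀ z ∈ K', dk^2 + (k:ℝ) * c^2 ≤ ‖y0 - z‖^2 := by
      intro z hz
      have hle : dk ≤ ‖y k - z‖ := by
        rw [hdk, ← dist_eq_norm]
        exact Metric.infDist_le_dist_of_mem hz
      have := pow_le_pow_left₀ hdk0 hle 2
      linarith [hcomb z hz]
    have h2 : Real.sqrt (dk^2 + (k:ℝ) * c^2) ≤ Metric.infDist y0 K' := by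
      have : Nonempty ↥K' := hK'ne.to_subtype
      rw [Metric.infDist_eq_iInf]
      apply le_ciInf
      intro z
      rw [dist_eq_norm]
      have := Real.sqrt_le_sqrt (h1 z z.2)
      rwa [Real.sqrt_sq (norm_nonneg _)] at this
    have hX0 : (0:ℝ) ≤ dk^2 + (k:ℝ) * c^2 := by positivity
    have h3 : dk^2 + (k:ℝ) * c^2 ≤ (Metric.infDist y0 K')^2 := by
      have := pow_le_pow_left₀ (Real.sqrt_nonneg _) h2 2
      rwa [Real.sq_sqrt hX0] at this
    have hcsq : c^2 = δ^2 * (r - δ')^2 := by rw [hcdef]; ring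
    rw [← hcsq]
    have h4 : (k:ℝ) ≤ ((Metric.infDist y0 K')^2 - dk^2) / c^2 := by
      rw [le_div_iff₀ (by positivity)]
      linarith
    linarith
  · -- y k ∈ ρ • K
    exact ⟨ρ⁻¹ • y k, hstop, smul_inv_smul₀ hρ0.ne' _⟩
  · intro z hz
    have := hcomb z hz
    linarith
end

section
/- Let f : R^n → R be convex and β-smooth over a convex compact set K ⊂ R^n of Euclidean diameter 2R, and let x* ∈ argmin_{x∈K} f(x). Then the Frank-Wolfe algorithm with exact line search (v_i ∈ argmin_{x∈K} ∇f(x_i)ᵀx, σ_i = argmin_{σ∈[0,1]} f(x_i + σ(v_i - x_i)), x_{i+1} = x_i + σ_i(v_i - x_i)) guarantees f(x_i) - f(x*) ≤ 2β(2R)²/(i+2) for all i ≥ 1. -/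
open Metric Set Filter
open scoped RealInnerProductSpace

variable {n : ℕ}

private lemma line_deriv (f : EuclideanSpace ℝ (Fin n) → ℝ)
    (f' : EuclideanSpace ℝ (Fin n) → EuclideanSpace ℝ (Fin n))
    (hf : ∀ x, HasGradientAt f (f' x) x) (c d : EuclideanSpace ℝ (Fin n)) (t : ℝ) :
    HasDerivAt (fun s : ℝ => f (c + s • d)) ⟪f' (c + t • d), d⟫ t := by
  have h1 : HasDerivAt (fun s : ℝ => c + s • d) d t := by
    simpa using ((hasDerivAt_id t).smul_const d).const_add c
  have h2 := (hasGradientAt_iff_hasFDerivAt.mp (hf (c + t • d))).comp_hasDerivAt t h1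
  simpa [InnerProductSpace.toDual_apply_apply, Function.comp_def] using h2

private lemma grad_convex_ineq {K : Set (EuclideanSpace ℝ (Fin n))}
    (f : EuclideanSpace ℝ (Fin n) → ℝ)
    (f' : EuclideanSpace ℝ (Fin n) → EuclideanSpace ℝ (Fin n))
    (hf : ∀ x, HasGradientAt f (f' x) x) (hconv : ConvexOn ℝ K f)
    {a b : EuclideanSpace ℝ (Fin n)} (ha : a ∈ K) (hb : b ∈ K) :
    ⟪f' a, b - a⟫ ≤ f b - f a := by
  set g : ℝ → ℝ := fun s => f (a + s • (b - a)) with hg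
  have hd : HasDerivAt g ⟪f' a, b - a⟫ 0 := by
    have := line_deriv f f' hf a (b - a) 0
    simpa using this
  have hslope := hasDerivAt_iff_tendsto_slope.mp hd
  have hmono : Tendsto (slope g 0) (nhdsWithin 0 (Set.Ioi 0)) (nhds ⟪f' a, b - a⟫) :=
    hslope.mono_left (nhdsWithin_mono 0 (fun t ht => ne_of_gt ht))
  refine le_of_tendsto hmono ?_
  filter_upwards [Ioo_mem_nhdsGT_of_mem (Set.mem_Ico.mpr ⟨le_refl _, zero_lt_one⟩)] with t ht
  have ht0 : (0:ℝ) < t := ht.1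
  have ht1 : t ≤ 1 := le_of_lt ht.2
  have hcomb : a + t • (b - a) = (1 - t) • a + t • b := by module
  have hcv := hconv.2 ha hb (by linarith : (0:ℝ) ≤ 1 - t) (le_of_lt ht0) (by ring)
  rw [← hcomb] at hcv
  have hg0 : g 0 = f a := by simp [hg]
  rw [slope_def_field]
  rw [div_le_iff₀ (by linarith : (0:ℝ) < t - 0)]
  have : g t ≤ (1 - t) * f a + t * f b := hcv
  nlinarith [this]

private lemma descent_lemma {K : Set (EuclideanSpace ℝ (Fin n))} (hK : Convex ℝ K)
    {β : ℝ} (f : EuclideanSpace ℝ (Fin n) → ℝ)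
    (f' : EuclideanSpace ℝ (Fin n) → EuclideanSpace ℝ (Fin n))
    (hf : ∀ x, HasGradientAt f (f' x) x)
    (hsmooth : ∀ x ∈ K, ∀ y ∈ K, ‖f' x - f' y‖ ≤ β * ‖x - y‖)
    {a b : EuclideanSpace ℝ (Fin n)} (ha : a ∈ K) (hb : b ∈ K) :
    f b ≤ f a + ⟪f' a, b - a⟫ + β / 2 * ‖b - a‖ ^ 2 := by
  set d := b - a with hd
  set g : ℝ → ℝ := fun s => f (a + s • d) with hg
  set g' : ℝ → ℝ := fun s => ⟪f' (a + s • d), d⟫ with hg'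
  have hmem : ∀ t ∈ Set.Icc (0:ℝ) 1, a + t • d ∈ K := by
    intro t ht
    have : (1 - t) • a + t • b ∈ K := hK ha hb (by linarith [ht.2]) ht.1 (by ring)
    have hcomb : a + t • d = (1 - t) • a + t • b := by rw [hd]; module
    rw [hcomb]; exact this
  have hderiv : ∀ t ∈ Set.uIcc (0:ℝ) 1, HasDerivAt g (g' t) t :=
    fun t _ => line_deriv f f' hf a d t
  have hlip : ContinuousOn f' K :=
    (LipschitzOnWith.of_dist_le' (K := β) (fun x hx y hy => by
      simpa [dist_eq_norm] using hsmooth x hx y hy)).continuousOn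
  have hc : ContinuousOn (fun t : ℝ => a + t • d) (Set.Icc (0:ℝ) 1) :=
    (continuous_const.add (continuous_id.smul continuous_const)).continuousOn
  have hcont : ContinuousOn g' (Set.Icc (0:ℝ) 1) :=
    ContinuousOn.inner (hlip.comp hc hmem) continuousOn_const
  have hint : IntervalIntegrable g' MeasureTheory.volume 0 1 := by
    apply ContinuousOn.intervalIntegrable
    rwa [Set.uIcc_of_le (zero_le_one)]
  have heq : ∫ t in (0:ℝ)..1, g' t = g 1 - g 0 :=
    intervalIntegral.integral_eq_sub_of_hasDerivAt hderiv hint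
  have hbound : ∀ t ∈ Set.Icc (0:ℝ) 1, g' t ≤ ⟪f' a, d⟫ + (β * ‖d‖ ^ 2) * t := by
    intro t ht
    have h1 : g' t - ⟪f' a, d⟫ = ⟪f' (a + t • d) - f' a, d⟫ := by
      simp [hg', inner_sub_left]
    have h2 : ⟪f' (a + t • d) - f' a, d⟫ ≤ ‖f' (a + t • d) - f' a‖ * ‖d‖ :=
      real_inner_le_norm _ _
    have h3 : ‖f' (a + t • d) - f' a‖ ≤ β * ‖a + t • d - a‖ :=
      hsmooth _ (hmem t ht) a ha
    have h4 : ‖a + t • d - a‖ = t * ‖d‖ := by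
      have : a + t • d - a = t • d := by abel
      rw [this, norm_smul, Real.norm_eq_abs, abs_of_nonneg ht.1]
    have hdn : (0:ℝ) ≤ ‖d‖ := norm_nonneg _
    rw [h4] at h3
    nlinarith [mul_le_mul_of_nonneg_right h3 hdn]
  have hcont2 : Continuous (fun t : ℝ => ⟪f' a, d⟫ + (β * ‖d‖ ^ 2) * t) :=
    continuous_const.add (continuous_const.mul continuous_id)
  have hint2 : IntervalIntegrable (fun t => ⟪f' a, d⟫ + (β * ‖d‖ ^ 2) * t)
      MeasureTheory.volume 0 1 := hcont2.intervalIntegrable _ _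
  have hmono : ∫ t in (0:ℝ)..1, g' t ≤
      ∫ t in (0:ℝ)..1, (⟪f' a, d⟫ + (β * ‖d‖ ^ 2) * t) := by
    apply intervalIntegral.integral_mono_on zero_le_one hint hint2 hbound
  have hval : ∫ t in (0:ℝ)..1, (⟪f' a, d⟫ + (β * ‖d‖ ^ 2) * t)
      = ⟪f' a, d⟫ + β / 2 * ‖d‖ ^ 2 := by
    rw [intervalIntegral.integral_add (f := fun _ => ⟪f' a, d⟫) (g := fun t : ℝ => (β * ‖d‖ ^ 2) * t) (intervalIntegrable_const)
      (((continuous_const.mul continuous_id :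
        Continuous fun t : ℝ => (β * ‖d‖ ^ 2) * t)).intervalIntegrable _ _)]
    rw [intervalIntegral.integral_const_mul, integral_id]
    simp
    ring
  have hg1 : g 1 = f b := by simp [hg, hd]
  have hg0 : g 0 = f a := by simp [hg]
  rw [heq, hg1, hg0] at hmono
  rw [hval] at hmono
  linarith
theorem stmt14 {n : ℕ} (K : Set (EuclideanSpace ℝ (Fin n))) (hK : Convex ℝ K)
    (hKc : IsCompact K) (R β : ℝ) (hβ : 0 < β)
    (hdiam : ∀ x ∈ K, ∀ y ∈ K, ‖x - y‖ ≤ 2 * R)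
    (f : EuclideanSpace ℝ (Fin n) → ℝ)
    (f' : EuclideanSpace ℝ (Fin n) → EuclideanSpace ℝ (Fin n))
    (hf : ∀ x, HasGradientAt f (f' x) x)
    (hconv : ConvexOn ℝ K f)
    (hsmooth : ∀ x ∈ K, ∀ y ∈ K, ‖f' x - f' y‖ ≤ β * ‖x - y‖)
    (xstar : EuclideanSpace ℝ (Fin n)) (hxstar : xstar ∈ K)
    (hmin : ∀ z ∈ K, f xstar ≤ f z)
    (x v : ℕ → EuclideanSpace ℝ (Fin n)) (σ : ℕ → ℝ)
    (hx0 : x 0 ∈ K)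
    (hv : ∀ i, v i ∈ K ∧ ∀ z ∈ K, ⟪f' (x i), v i⟫ ≤ ⟪f' (x i), z⟫)
    (hσ : ∀ i, σ i ∈ Set.Icc (0 : ℝ) 1 ∧
      ∀ s ∈ Set.Icc (0 : ℝ) 1,
        f (x i + σ i • (v i - x i)) ≤ f (x i + s • (v i - x i)))
    (hupd : ∀ i, x (i + 1) = x i + σ i • (v i - x i)) :
    ∀ i : ℕ, 1 ≤ i → f (x i) - f xstar ≤ 2 * β * (2 * R) ^ 2 / (i + 2) := by
  have hR : (0:ℝ) ≤ 2 * R := by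
    have := hdiam xstar hxstar xstar hxstar
    simpa using this
  set B : ℝ := β * (2 * R) ^ 2 with hB
  have hB0 : 0 ≤ B := by positivity
  have hxK : ∀ i, x i ∈ K := by
    intro i
    induction i with
    | zero => exact hx0
    | succ i ih =>
      rw [hupd i]
      have hcomb : x i + σ i • (v i - x i) = (1 - σ i) • x i + σ i • v i := by module
      rw [hcomb]
      exact hK ih (hv i).1 (by linarith [(hσ i).1.2]) (hσ i).1.1 (by ring)
  have hpos : ∀ i, 0 ≤ f (x i) - f xstar := fun i => by linarith [hmin (x i) (hxK i)]
  have key : ∀ i, ∀ s ∈ Set.Icc (0:ℝ) 1,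
      f (x (i+1)) - f xstar ≤ (1 - s) * (f (x i) - f xstar) + β / 2 * s ^ 2 * (2*R) ^ 2 := by
    intro i s hs
    have hbK : x i + s • (v i - x i) ∈ K := by
      have hcomb : x i + s • (v i - x i) = (1 - s) • x i + s • v i := by module
      rw [hcomb]
      exact hK (hxK i) (hv i).1 (by linarith [hs.2]) hs.1 (by ring)
    have h1 : f (x (i+1)) ≤ f (x i + s • (v i - x i)) := by
      rw [hupd i]; exact (hσ i).2 s hs
    have h2 := descent_lemma hK f f' hf hsmooth (hxK i) hbK
    have h3 : (x i + s • (v i - x i)) - x i = s • (v i - x i) := by abel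
    rw [h3] at h2
    have h4 : ⟪f' (x i), s • (v i - x i)⟫ = s * ⟪f' (x i), v i - x i⟫ :=
      real_inner_smul_right _ _ _
    have h4' : ‖s • (v i - x i)‖ ^ 2 = s ^ 2 * ‖v i - x i‖ ^ 2 := by
      rw [norm_smul, Real.norm_eq_abs, mul_pow, sq_abs]
    have h5 : ⟪f' (x i), v i - x i⟫ ≤ f xstar - f (x i) := by
      have ha := (hv i).2 xstar hxstar
      have hb := grad_convex_ineq f f' hf hconv (hxK i) hxstar
      rw [inner_sub_right] at hb ⊢
      linarith
    have h6 : ‖v i - x i‖ ^ 2 ≤ (2*R) ^ 2 := by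
      have := hdiam _ (hv i).1 _ (hxK i)
      nlinarith [norm_nonneg (v i - x i)]
    rw [h4, h4'] at h2
    nlinarith [mul_le_mul_of_nonneg_left h5 hs.1, mul_le_mul_of_nonneg_left h6 (by positivity : (0:ℝ) ≤ β / 2 * s ^ 2)]
  intro i hi
  induction i with
  | zero => omega
  | succ i ih =>
    by_cases h0 : i = 0
    · subst h0
      have hk := key 0 1 ⟨zero_le_one, le_refl 1⟩
      push_cast
      norm_num at hk ⊢
      linarith
    · have hi' : 1 ≤ i := Nat.one_le_iff_ne_zero.mpr h0
      have ih' := ih hi'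
      set t : ℝ := (i:ℝ) + 2 with hti
      have ht3 : (3:ℝ) ≤ t := by
        have : (1:ℝ) ≤ (i:ℝ) := by exact_mod_cast hi'
        simp only [hti]; linarith
      have ht0 : (0:ℝ) < t := by linarith
      have hsIcc : (2/t) ∈ Set.Icc (0:ℝ) 1 := by
        constructor
        · positivity
        · rw [div_le_one ht0]; linarith
      have hk := key i (2/t) hsIcc
      have hihB : f (x i) - f xstar ≤ 2 * B / t := by
        have : (↑i + 2 : ℝ) = t := hti.symm
        calc f (x i) - f xstar ≤ 2 * β * (2*R)^2 / (↑i + 2) := ih'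
          _ = 2 * B / t := by rw [hB, this]; ring
      have e1 : (1 - 2/t) * (f (x i) - f xstar) ≤ (1 - 2/t) * (2 * B / t) := by
        apply mul_le_mul_of_nonneg_left hihB
        have : 2/t ≤ 1 := hsIcc.2
        linarith
      have e2 : (1 - 2/t) * (2 * B / t) + β / 2 * (2/t) ^ 2 * (2*R) ^ 2
          = 2 * B * (t - 1) / t ^ 2 := by
        rw [hB]; field_simp; ring
      have e3 : 2 * B * (t - 1) / t ^ 2 ≤ 2 * B / (t + 1) := by
        rw [div_le_div_iff₀ (by positivity) (by linarith)]
        nlinarith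
      have goal_eq : 2 * β * (2*R)^2 / ((↑(i+1) : ℝ) + 2) = 2 * B / (t + 1) := by
        push_cast
        rw [hB, hti]
        ring_nf
      rw [goal_eq]
      linarith
end

section
/- Let K ⊂ R^n be convex with 0 ∈ K and K ⊆ RB, and consider the procedure that, given x_0 ∈ K and y_0, sets y_1 = y_0 / max{1, ‖y_0‖/R} (projection onto RB), and iteratively, given y_i ∉ within distance √(3ε) of a returned point x_i ∈ K satisfying (y_i - z)ᵀ(y_i - x_i) ≥ 2ε for all z ∈ K and ‖y_i - x_i‖ ≤ ‖y_0 - x_0‖, updates y_{i+1} = y_i - γ(y_i - x_i) with γ = 2ε/‖x_0 - y_0‖². Then for every i, dist²(y_{i+1}, K) ≤ dist²(y_i, K) - 4ε²/‖x_0 - y_0‖². -/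
open Metric Set
open scoped RealInnerProductSpace

theorem stmt16 {n : ℕ} (K : Set (EuclideanSpace ℝ (Fin n))) (hK : Convex ℝ K)
    (hKc : IsCompact K) (hKne : K.Nonempty)
    (x0 y0 : EuclideanSpace ℝ (Fin n)) (hx0 : x0 ∈ K)
    (ε : ℝ) (hε : 0 < ε) (hfar : 3 * ε < ‖x0 - y0‖ ^ 2)
    (x y : ℕ → EuclideanSpace ℝ (Fin n))
    (hxK : ∀ i, x i ∈ K)
    (hsep : ∀ i, ∀ z ∈ K, 2 * ε ≤ ⟪y i - z, y i - x i⟫)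
    (hclose : ∀ i, ‖y i - x i‖ ≤ ‖y0 - x0‖)
    (hupd : ∀ i, y (i + 1) = y i - (2 * ε / ‖x0 - y0‖ ^ 2) • (y i - x i)) :
    ∀ i, (Metric.infDist (y (i + 1)) K) ^ 2 ≤
      (Metric.infDist (y i) K) ^ 2 - 4 * ε ^ 2 / ‖x0 - y0‖ ^ 2 := by
  intro i
  have hC2 : (0:ℝ) < ‖x0 - y0‖ ^ 2 := lt_trans (by positivity) hfar
  set C2 := ‖x0 - y0‖ ^ 2 with hC2def
  obtain ⟨z, hzK, hz⟩ := hKc.exists_infDist_eq_dist hKne (y i)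
  set γ := 2 * ε / C2 with hγdef
  have hγpos : 0 < γ := by positivity
  have hg : ‖y i - x i‖ ^ 2 ≤ C2 := by
    rw [hC2def]
    have h1 : ‖y i - x i‖ ≤ ‖x0 - y0‖ := by
      rw [← norm_neg (x0 - y0)]; simpa [neg_sub] using hclose i
    exact pow_le_pow_left₀ (norm_nonneg _) h1 2
  have key : ‖y (i+1) - z‖ ^ 2 ≤ ‖y i - z‖ ^ 2 - 4 * ε ^ 2 / C2 := by
    have hrw : y (i+1) - z = (y i - z) - γ • (y i - x i) := by
      rw [hupd i]; abel_nf
    rw [hrw, norm_sub_sq_real, real_inner_smul_right, norm_smul, mul_pow]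
    have hip := hsep i z hzK
    have : γ * (2 * ε) ≤ γ * ⟪y i - z, y i - x i⟫ :=
      mul_le_mul_of_nonneg_left hip hγpos.le
    have hns : ‖γ‖ ^ 2 * ‖y i - x i‖ ^ 2 ≤ γ ^ 2 * C2 := by
      rw [Real.norm_eq_abs, sq_abs]
      exact mul_le_mul_of_nonneg_left hg (sq_nonneg γ)
    have hγC : γ ^ 2 * C2 = 4 * ε ^ 2 / C2 := by
      rw [hγdef]; field_simp [hγdef]; ring
    have hγε : γ * (2 * ε) = 4 * ε ^ 2 / C2 := by
      rw [hγdef]; field_simp [hγdef]; ring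
    nlinarith [this, hns]
  have h1 : Metric.infDist (y (i+1)) K ≤ ‖y (i+1) - z‖ := by
    simpa [dist_eq_norm] using Metric.infDist_le_dist_of_mem (x := y (i+1)) hzK
  have h2 : Metric.infDist (y i) K = ‖y i - z‖ := by rw [hz, dist_eq_norm]
  have h3 : (Metric.infDist (y (i+1)) K) ^ 2 ≤ ‖y (i+1) - z‖ ^ 2 :=
    pow_le_pow_left₀ (Metric.infDist_nonneg) h1 2
  rw [h2]
  linarith [key, h3]
end
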